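/- Let H be a finite dimensional Hopf algebra. For Hopf automorphisms α, β, γ, δ of H, the map ξ_(α,β)^(γ,δ) : H* ⋈ H_(γ,δ) → H* ⋈ H_{(α,β)*(γ,δ)*(α,β)⁻¹} defined by ξ_(α,β)^(γ,δ)(p ⋈ h) = (p ∘ βα⁻¹) ⋈ αγ⁻¹β⁻¹γ(h) is an algebra isomorphism, where (α,β)*(γ,δ)*(α,β)⁻¹ = (αγα⁻¹, αβ⁻¹δγ⁻¹βγα⁻¹). -/

import Mathlib

open TensorProduct LinearMap

noncomputable section

namespace DCP

variable (K : Type) {H : Type} [Field K] [Ring H] [HopfAlgebra K H]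

/-- A Hopf algebra automorphism: a linear equivalence that is an algebra morphism and a
coalgebra morphism. -/
def IsHopfAut (f : H ≃ₗ[K] H) : Prop :=
  (∀ x y : H, f (x * y) = f x * f y) ∧ f 1 = 1 ∧
    (Coalgebra.comul ∘ₗ f.toLinearMap
      = TensorProduct.map f.toLinearMap f.toLinearMap ∘ₗ Coalgebra.comul) ∧
    (Coalgebra.counit ∘ₗ f.toLinearMap = (Coalgebra.counit : H →ₗ[K] K))

/-- The convolution product on the dual of `H`, as a bilinear map. -/
def convMul : Module.Dual K H →ₗ[K] Module.Dual K H →ₗ[K] Module.Dual K H :=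
  (TensorProduct.mapBilinear (RingHom.id K) H H K K).compr₂
    ((LinearMap.lcomp K K (Coalgebra.comul (R := K) (A := H))) ∘ₗ
      (LinearMap.llcomp K (H ⊗[K] H) (K ⊗[K] K) K (TensorProduct.lid K K).toLinearMap))

@[simp] lemma convMul_apply (p q : Module.Dual K H) (x : H) :
    convMul K p q x = (TensorProduct.lid K K).toLinearMap
      (TensorProduct.map p q (Coalgebra.comul x)) := rfl

/-- The coproduct on the dual of a finite-dimensional Hopf algebra, dual to multiplication. -/
def dcomul [FiniteDimensional K H] :
    Module.Dual K H →ₗ[K] Module.Dual K H ⊗[K] Module.Dual K H :=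
  (TensorProduct.dualDistribEquiv K H H).symm.toLinearMap ∘ₗ (LinearMap.mul' K H).dualMap

/-- The iterated comultiplication `h ↦ h₁ ⊗ (h₂ ⊗ h₃)`. -/
def comul2 : H →ₗ[K] H ⊗[K] (H ⊗[K] H) :=
  (LinearMap.lTensor H (Coalgebra.comul (R := K))) ∘ₗ Coalgebra.comul

/-- Lift a trilinear map to the triple tensor product `H ⊗ (H ⊗ H)`. -/
def lift3 {W : Type} [AddCommMonoid W] [Module K W]
    (Φ : H →ₗ[K] H →ₗ[K] H →ₗ[K] W) : H ⊗[K] (H ⊗[K] H) →ₗ[K] W :=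
  TensorProduct.lift ((TensorProduct.lift.equiv (RingHom.id K) H H W).toLinearMap ∘ₗ Φ)

variable {K}

/-- auxiliary linear map `h₃ ↦ F (p ∘ mulLeft (u h₃) ∘ mulRight (v h₁)) ⊗ g h₂`. -/
def inner3 (u : H →ₗ[K] H) (F : Module.Dual K H →ₗ[K] Module.Dual K H)
    (p : Module.Dual K H) (a g2 : H) : H →ₗ[K] Module.Dual K H ⊗[K] H :=
  ((TensorProduct.mk K (Module.Dual K H) H).flip g2) ∘ₗ F ∘ₗ
    (LinearMap.llcomp K H H K p) ∘ₗ
    ((LinearMap.llcomp K H H H).flip (LinearMap.mulRight K a)) ∘ₗ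
    ((LinearMap.mul K H) ∘ₗ u)

@[simp] lemma inner3_apply (u : H →ₗ[K] H) (F : Module.Dual K H →ₗ[K] Module.Dual K H)
    (p : Module.Dual K H) (a g2 h₃ : H) :
    inner3 u F p a g2 h₃
      = F (p ∘ₗ LinearMap.mulLeft K (u h₃) ∘ₗ LinearMap.mulRight K a) ⊗ₜ[K] g2 := by
  rfl

variable (K)

/-- The curried trilinear map
`(h₁, h₂, h₃) ↦ F (p ∘ mulLeft (u h₃) ∘ mulRight (v h₁)) ⊗ g h₂`. -/
def coreTri (u v : H →ₗ[K] H) (F : Module.Dual K H →ₗ[K] Module.Dual K H)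
    (g : H →ₗ[K] H) (p : Module.Dual K H) :
    H →ₗ[K] H →ₗ[K] H →ₗ[K] Module.Dual K H ⊗[K] H :=
  LinearMap.mk₂ K (fun h₁ h₂ => inner3 u F p (v h₁) (g h₂))
    (fun m m' n => by
      have hR : ∀ a b : H, LinearMap.mulRight K (a + b)
          = LinearMap.mulRight K a + LinearMap.mulRight K b := by
        intro a b; ext x; simp [mul_add]
      ext h₃
      simp [hR, LinearMap.comp_add, LinearMap.add_comp, map_add, add_tmul])
    (fun c m n => by
      have hR : ∀ a : H, LinearMap.mulRight K ((c : K) • a)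
          = c • LinearMap.mulRight K a := by
        intro a; ext x; simp [mul_smul_comm]
      ext h₃
      simp [hR, LinearMap.comp_smul, LinearMap.smul_comp, map_smul, smul_tmul'])
    (fun m n n' => by
      ext h₃
      simp [map_add, tmul_add])
    (fun c m n => by
      ext h₃
      simp [map_smul, tmul_smul])

/-- The diagonal crossed product of pure tensors:
`(p ⋈ h)(q ⋈ l) = Σ p (α(h₁) ▶ q ◀ S⁻¹β(h₃)) ⋈ h₂ l`. -/
def dprod (α β Sinv : H →ₗ[K] H) (p : Module.Dual K H) (h : H)
    (q : Module.Dual K H) (l : H) : Module.Dual K H ⊗[K] H :=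
  lift3 K (coreTri K (Sinv ∘ₗ β) α (convMul K p) (LinearMap.mulRight K l) q) (comul2 K h)

/-- The value of the antipode of the diagonal crossed product on a pure tensor. -/
def smapVal (α β Sinv : H →ₗ[K] H) (p : Module.Dual K H) (h : H) :
    Module.Dual K H ⊗[K] H :=
  lift3 K (coreTri K (Sinv ∘ₗ β ∘ₗ HopfAlgebra.antipode (R := K))
      (Sinv ∘ₗ α) Sinv.dualMap
      (α ∘ₗ β ∘ₗ HopfAlgebra.antipode (R := K)) p) (comul2 K h)

/-- Componentwise product on a tensor product of two (nonunital) algebras given by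
bilinear multiplications. -/
def tmul₂ {A B : Type} [AddCommMonoid A] [Module K A] [AddCommMonoid B] [Module K B]
    (M1 : A →ₗ[K] A →ₗ[K] A) (M2 : B →ₗ[K] B →ₗ[K] B) :
    A ⊗[K] B →ₗ[K] A ⊗[K] B →ₗ[K] A ⊗[K] B :=
  (TensorProduct.homTensorHomMap (RingHom.id K) A B A B) ∘ₗ (TensorProduct.map M1 M2)

/-- The comultiplication component `Δ_{(α,β),(γ,δ)}(p ⋈ h) = Σ (p₂ ⋈ c h₁) ⊗ (p₁ ⋈ e h₂)`
(with `c = γ`, `e = γ⁻¹βγ`). -/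
def deltaComp [FiniteDimensional K H] (c e : H →ₗ[K] H) :
    Module.Dual K H ⊗[K] H →ₗ[K]
      (Module.Dual K H ⊗[K] H) ⊗[K] (Module.Dual K H ⊗[K] H) :=
  (TensorProduct.tensorTensorTensorComm K (Module.Dual K H) (Module.Dual K H) H H).toLinearMap ∘ₗ
    TensorProduct.map
      ((TensorProduct.comm K (Module.Dual K H) (Module.Dual K H)).toLinearMap ∘ₗ dcomul K)
      (TensorProduct.map c e ∘ₗ Coalgebra.comul)

/-- The crossing map `ξ_(a,b)^(c,·)(p ⋈ h) = (p ∘ b a⁻¹) ⋈ a c⁻¹ b⁻¹ c (h)`. -/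
def xiMap (a b c : H ≃ₗ[K] H) :
    Module.Dual K H ⊗[K] H →ₗ[K] Module.Dual K H ⊗[K] H :=
  TensorProduct.map ((b.toLinearMap ∘ₗ a.symm.toLinearMap).dualMap)
    (a.toLinearMap ∘ₗ c.symm.toLinearMap ∘ₗ b.symm.toLinearMap ∘ₗ c.toLinearMap)

/-- Embedding of the dual into the crossed product, `p ↦ p ⋈ 1`. -/
def toD1 : Module.Dual K H →ₗ[K] Module.Dual K H ⊗[K] H :=
  (TensorProduct.mk K (Module.Dual K H) H).flip 1

/-- Embedding of `H` into the crossed product, `h ↦ ε ⋈ h`. -/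
def toD2 : H →ₗ[K] Module.Dual K H ⊗[K] H :=
  TensorProduct.mk K (Module.Dual K H) H (Coalgebra.counit (R := K))

end DCP



section Auxiliary

open Coalgebra HopfAlgebra

variable {K H : Type} [Field K] [Ring H] [HopfAlgebra K H]

/-- Convolution product on `End H`. -/
def conv (f g : H →ₗ[K] H) : H →ₗ[K] H :=
  LinearMap.mul' K H ∘ₗ TensorProduct.map f g ∘ₗ Coalgebra.comul

/-- The convolution unit. -/
def cunit : H →ₗ[K] H := Algebra.linearMap K H ∘ₗ Coalgebra.counit

lemma conv_one_left (f : H →ₗ[K] H) : conv (cunit (K := K) (H := H)) f = f := by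
  apply LinearMap.ext; intro x
  have h1 : TensorProduct.map (cunit (K := K) (H := H)) f
      = TensorProduct.map (Algebra.linearMap K H) f ∘ₗ (Coalgebra.counit (R := K)).rTensor H := by
    rw [show (Coalgebra.counit (R := K) (A := H)).rTensor H
        = TensorProduct.map Coalgebra.counit LinearMap.id from rfl,
      ← TensorProduct.map_comp]
    rfl
  simp only [conv, comp_apply, h1]
  rw [Coalgebra.rTensor_counit_comul]
  simp [Algebra.smul_def]

lemma conv_one_right (f : H →ₗ[K] H) : conv f (cunit (K := K) (H := H)) = f := by
  apply LinearMap.ext; intro x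
  have h1 : TensorProduct.map f (cunit (K := K) (H := H))
      = TensorProduct.map f (Algebra.linearMap K H) ∘ₗ (Coalgebra.counit (R := K)).lTensor H := by
    rw [show (Coalgebra.counit (R := K) (A := H)).lTensor H
        = TensorProduct.map LinearMap.id Coalgebra.counit from rfl,
      ← TensorProduct.map_comp]
    rfl
  simp only [conv, comp_apply, h1]
  rw [Coalgebra.lTensor_counit_comul]
  simp [Algebra.smul_def, mul_comm]

lemma mul_assoc_map :
    (LinearMap.mul' K H) ∘ₗ TensorProduct.map (LinearMap.mul' K H) LinearMap.id
      = (LinearMap.mul' K H) ∘ₗ TensorProduct.map LinearMap.id (LinearMap.mul' K H)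
          ∘ₗ (TensorProduct.assoc K H H H).toLinearMap := by
  apply TensorProduct.ext
  apply TensorProduct.ext
  ext x y z
  simp [mul_assoc]

lemma assoc_nat (f g h : H →ₗ[K] H) :
    (TensorProduct.assoc K H H H).toLinearMap
        ∘ₗ TensorProduct.map (TensorProduct.map f g) h
      = TensorProduct.map f (TensorProduct.map g h)
          ∘ₗ (TensorProduct.assoc K H H H).toLinearMap := by
  apply TensorProduct.ext
  apply TensorProduct.ext
  ext x y z
  simp

lemma conv_assoc (f g h : H →ₗ[K] H) : conv (conv f g) h = conv f (conv g h) := by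
  unfold conv
  have h1 : TensorProduct.map (LinearMap.mul' K H ∘ₗ TensorProduct.map f g ∘ₗ Coalgebra.comul) h
      = TensorProduct.map (LinearMap.mul' K H) LinearMap.id
        ∘ₗ TensorProduct.map (TensorProduct.map f g) h
        ∘ₗ TensorProduct.map Coalgebra.comul LinearMap.id := by
    rw [← TensorProduct.map_comp, ← TensorProduct.map_comp]
    simp
  have h2 : TensorProduct.map f (LinearMap.mul' K H ∘ₗ TensorProduct.map g h ∘ₗ Coalgebra.comul)
      = TensorProduct.map LinearMap.id (LinearMap.mul' K H)
        ∘ₗ TensorProduct.map f (TensorProduct.map g h)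
        ∘ₗ TensorProduct.map LinearMap.id Coalgebra.comul := by
    rw [← TensorProduct.map_comp, ← TensorProduct.map_comp]
    simp
  rw [h1, h2]
  apply LinearMap.ext; intro x
  simp only [comp_apply]
  have hco : TensorProduct.map LinearMap.id Coalgebra.comul (Coalgebra.comul x)
      = (TensorProduct.assoc K H H H)
          (TensorProduct.map Coalgebra.comul LinearMap.id (Coalgebra.comul x)) := by
    have := Coalgebra.coassoc_apply (R := K) x
    rw [show (Coalgebra.comul (R := K) (A := H)).rTensor H
        = TensorProduct.map Coalgebra.comul LinearMap.id from rfl,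
      show (Coalgebra.comul (R := K) (A := H)).lTensor H
        = TensorProduct.map LinearMap.id Coalgebra.comul from rfl] at this
    exact this.symm
  rw [hco]
  have hnat := LinearMap.congr_fun (assoc_nat f g h)
      (TensorProduct.map Coalgebra.comul LinearMap.id (Coalgebra.comul x))
  simp only [comp_apply, LinearEquiv.coe_coe] at hnat
  rw [← hnat]
  have hmul := LinearMap.congr_fun (mul_assoc_map (K := K) (H := H))
      (TensorProduct.map (TensorProduct.map f g) h
        (TensorProduct.map Coalgebra.comul LinearMap.id (Coalgebra.comul x)))
  simp only [comp_apply, LinearEquiv.coe_coe] at hmul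
  rw [hmul]

lemma conv_antipode_id :
    conv (HopfAlgebra.antipode (R := K) (A := H)) LinearMap.id = cunit := by
  unfold conv cunit
  rw [show TensorProduct.map (HopfAlgebra.antipode (R := K) (A := H)) LinearMap.id
      = (HopfAlgebra.antipode (R := K) (A := H)).rTensor H from rfl]
  exact HopfAlgebra.mul_antipode_rTensor_comul

lemma conv_id_antipode :
    conv LinearMap.id (HopfAlgebra.antipode (R := K) (A := H)) = cunit := by
  unfold conv cunit
  rw [show TensorProduct.map LinearMap.id (HopfAlgebra.antipode (R := K) (A := H))
      = (HopfAlgebra.antipode (R := K) (A := H)).lTensor H from rfl]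
  exact HopfAlgebra.mul_antipode_lTensor_comul

lemma conv_unique (T T' : H →ₗ[K] H) (h1 : conv T LinearMap.id = cunit)
    (h2 : conv LinearMap.id T' = cunit) : T = T' := by
  calc T = conv T cunit := (conv_one_right T).symm
  _ = conv T (conv LinearMap.id T') := by rw [h2]
  _ = conv (conv T LinearMap.id) T' := (conv_assoc _ _ _).symm
  _ = conv cunit T' := by rw [h1]
  _ = T' := conv_one_left T'

lemma symm_comp_self (f : H ≃ₗ[K] H) : f.symm.toLinearMap ∘ₗ f.toLinearMap = LinearMap.id := by
  ext w; simp

lemma comul_eq (f : H ≃ₗ[K] H) (hf : DCP.IsHopfAut K f) (x : H) :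
    Coalgebra.comul (R := K) x
      = TensorProduct.map f.toLinearMap f.toLinearMap (Coalgebra.comul (f.symm x)) := by
  have := LinearMap.congr_fun hf.2.2.1 (f.symm x)
  simpa using this

lemma counit_symm (f : H ≃ₗ[K] H) (hf : DCP.IsHopfAut K f) (x : H) :
    Coalgebra.counit (R := K) (f.symm x) = Coalgebra.counit (R := K) x := by
  have := LinearMap.congr_fun hf.2.2.2 (f.symm x)
  simpa using this.symm

lemma map_algebraMap (f : H ≃ₗ[K] H) (hf : DCP.IsHopfAut K f) (c : K) :
    f (algebraMap K H c) = algebraMap K H c := by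
  rw [Algebra.algebraMap_eq_smul_one, map_smul, hf.2.1]

lemma conv_conj_id (f : H ≃ₗ[K] H) (hf : DCP.IsHopfAut K f) :
    conv (f.toLinearMap ∘ₗ HopfAlgebra.antipode (R := K) ∘ₗ f.symm.toLinearMap) LinearMap.id
      = cunit := by
  apply LinearMap.ext; intro x
  simp only [conv, cunit, comp_apply]
  rw [comul_eq f hf x]
  have h1 : TensorProduct.map
        (f.toLinearMap ∘ₗ HopfAlgebra.antipode (R := K) ∘ₗ f.symm.toLinearMap) LinearMap.id
        ∘ₗ TensorProduct.map f.toLinearMap f.toLinearMap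
      = TensorProduct.map (f.toLinearMap ∘ₗ HopfAlgebra.antipode (R := K)) f.toLinearMap := by
    apply TensorProduct.ext'; intro a b
    simp
  rw [← comp_apply (TensorProduct.map _ _), h1]
  have h2 : (LinearMap.mul' K H) ∘ₗ
        TensorProduct.map (f.toLinearMap ∘ₗ HopfAlgebra.antipode (R := K)) f.toLinearMap
      = f.toLinearMap ∘ₗ (LinearMap.mul' K H)
          ∘ₗ TensorProduct.map (HopfAlgebra.antipode (R := K)) LinearMap.id := by
    apply TensorProduct.ext; ext a b
    simp [← hf.1]
  rw [← comp_apply (LinearMap.mul' K H), h2]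
  simp only [comp_apply]
  rw [show TensorProduct.map (HopfAlgebra.antipode (R := K) (A := H)) LinearMap.id
      = (HopfAlgebra.antipode (R := K) (A := H)).rTensor H from rfl]
  rw [HopfAlgebra.mul_antipode_rTensor_comul_apply]
  simp only [LinearEquiv.coe_coe, Algebra.linearMap_apply]
  rw [map_algebraMap f hf, counit_symm f hf]

lemma conv_id_conj (f : H ≃ₗ[K] H) (hf : DCP.IsHopfAut K f) :
    conv LinearMap.id (f.toLinearMap ∘ₗ HopfAlgebra.antipode (R := K) ∘ₗ f.symm.toLinearMap)
      = cunit := by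
  apply LinearMap.ext; intro x
  simp only [conv, cunit, comp_apply]
  rw [comul_eq f hf x]
  have h1 : TensorProduct.map LinearMap.id
        (f.toLinearMap ∘ₗ HopfAlgebra.antipode (R := K) ∘ₗ f.symm.toLinearMap)
        ∘ₗ TensorProduct.map f.toLinearMap f.toLinearMap
      = TensorProduct.map f.toLinearMap (f.toLinearMap ∘ₗ HopfAlgebra.antipode (R := K)) := by
    apply TensorProduct.ext'; intro a b
    simp
  rw [← comp_apply (TensorProduct.map _ _), h1]
  have h2 : (LinearMap.mul' K H) ∘ₗ
        TensorProduct.map f.toLinearMap (f.toLinearMap ∘ₗ HopfAlgebra.antipode (R := K))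
      = f.toLinearMap ∘ₗ (LinearMap.mul' K H)
          ∘ₗ TensorProduct.map LinearMap.id (HopfAlgebra.antipode (R := K)) := by
    apply TensorProduct.ext; ext a b
    simp [← hf.1]
  rw [← comp_apply (LinearMap.mul' K H), h2]
  simp only [comp_apply]
  rw [show TensorProduct.map LinearMap.id (HopfAlgebra.antipode (R := K) (A := H))
      = (HopfAlgebra.antipode (R := K) (A := H)).lTensor H from rfl]
  rw [HopfAlgebra.mul_antipode_lTensor_comul_apply]
  simp only [LinearEquiv.coe_coe, Algebra.linearMap_apply]
  rw [map_algebraMap f hf, counit_symm f hf]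

lemma aut_antipode_comm (f : H ≃ₗ[K] H) (hf : DCP.IsHopfAut K f) (x : H) :
    f (HopfAlgebra.antipode (R := K) x) = HopfAlgebra.antipode (R := K) (f x) := by
  have h := conv_unique (f.toLinearMap ∘ₗ HopfAlgebra.antipode (R := K) ∘ₗ f.symm.toLinearMap)
    (HopfAlgebra.antipode (R := K)) (conv_conj_id f hf) conv_id_antipode
  have := LinearMap.congr_fun h (f x)
  simpa using this

lemma aut_Sinv_comm (Sinv : H →ₗ[K] H)
    (hS1 : Sinv ∘ₗ HopfAlgebra.antipode (R := K) (A := H) = LinearMap.id)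
    (hS2 : HopfAlgebra.antipode (R := K) (A := H) ∘ₗ Sinv = LinearMap.id)
    (f : H ≃ₗ[K] H) (hf : DCP.IsHopfAut K f) (x : H) :
    Sinv (f x) = f (Sinv x) := by
  have h2 : HopfAlgebra.antipode (R := K) (Sinv x) = x := LinearMap.congr_fun hS2 x
  have h1 : ∀ w : H, Sinv (HopfAlgebra.antipode (R := K) w) = w :=
    fun w => LinearMap.congr_fun hS1 w
  calc Sinv (f x) = Sinv (f (HopfAlgebra.antipode (R := K) (Sinv x))) := by rw [h2]
  _ = Sinv (HopfAlgebra.antipode (R := K) (f (Sinv x))) := by rw [aut_antipode_comm f hf]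
  _ = f (Sinv x) := h1 _

lemma aut_symm_mul (f : H ≃ₗ[K] H) (hf : DCP.IsHopfAut K f) (x y : H) :
    f.symm (x * y) = f.symm x * f.symm y := by
  apply f.injective
  rw [hf.1]
  simp

lemma map_map_apply {M N P Q R' S' : Type} [AddCommMonoid M] [Module K M]
    [AddCommMonoid N] [Module K N] [AddCommMonoid P] [Module K P]
    [AddCommMonoid Q] [Module K Q] [AddCommMonoid R'] [Module K R']
    [AddCommMonoid S'] [Module K S']
    (f : P →ₗ[K] R') (g : Q →ₗ[K] S') (f' : M →ₗ[K] P) (g' : N →ₗ[K] Q) (t : M ⊗[K] N) :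
    TensorProduct.map f g (TensorProduct.map f' g' t)
      = TensorProduct.map (f ∘ₗ f') (g ∘ₗ g') t := by
  rw [← comp_apply, ← TensorProduct.map_comp]

/-- coalgebra-morphism property (statement level). -/
def IsCoalgMor (f : H →ₗ[K] H) : Prop :=
  Coalgebra.comul ∘ₗ f = TensorProduct.map f f ∘ₗ Coalgebra.comul

lemma isCoalgMor_comp {f g : H →ₗ[K] H} (hf : IsCoalgMor f) (hg : IsCoalgMor g) :
    IsCoalgMor (f ∘ₗ g) := by
  unfold IsCoalgMor at *
  calc Coalgebra.comul ∘ₗ (f ∘ₗ g) = (Coalgebra.comul ∘ₗ f) ∘ₗ g := by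
        rw [LinearMap.comp_assoc]
  _ = (TensorProduct.map f f ∘ₗ Coalgebra.comul) ∘ₗ g := by rw [hf]
  _ = TensorProduct.map f f ∘ₗ (Coalgebra.comul ∘ₗ g) := by rw [LinearMap.comp_assoc]
  _ = TensorProduct.map f f ∘ₗ (TensorProduct.map g g ∘ₗ Coalgebra.comul) := by rw [hg]
  _ = (TensorProduct.map f f ∘ₗ TensorProduct.map g g) ∘ₗ Coalgebra.comul := by
        rw [LinearMap.comp_assoc]
  _ = TensorProduct.map (f ∘ₗ g) (f ∘ₗ g) ∘ₗ Coalgebra.comul := by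
        rw [TensorProduct.map_comp]

lemma isCoalgMor_symm (f : H ≃ₗ[K] H) (hf : IsCoalgMor f.toLinearMap) :
    IsCoalgMor f.symm.toLinearMap := by
  apply LinearMap.ext; intro x
  have h1 := LinearMap.congr_fun hf (f.symm x)
  simp only [comp_apply, LinearEquiv.coe_coe, LinearEquiv.apply_symm_apply] at h1 ⊢
  calc Coalgebra.comul (R := K) (f.symm x)
      = TensorProduct.map f.symm.toLinearMap f.symm.toLinearMap
          (TensorProduct.map f.toLinearMap f.toLinearMap
            (Coalgebra.comul (f.symm x))) := by
        rw [map_map_apply, symm_comp_self, TensorProduct.map_id]; rfl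
  _ = TensorProduct.map f.symm.toLinearMap f.symm.toLinearMap (Coalgebra.comul x) := by
        rw [← h1]
  
lemma convMul_comp {f : H →ₗ[K] H} (hf : IsCoalgMor f) (p r : Module.Dual K H) :
    (DCP.convMul K p r) ∘ₗ f = DCP.convMul K (p ∘ₗ f) (r ∘ₗ f) := by
  apply LinearMap.ext; intro x
  have h1 := LinearMap.congr_fun hf x
  simp only [comp_apply] at h1
  simp only [comp_apply, DCP.convMul_apply, h1, map_map_apply]

lemma lift3_tmul {W : Type} [AddCommMonoid W] [Module K W]
    (Φ : H →ₗ[K] H →ₗ[K] H →ₗ[K] W) (x y z : H) :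
    DCP.lift3 K Φ (x ⊗ₜ[K] (y ⊗ₜ[K] z)) = Φ x y z := rfl

end Auxiliary

/-- The crossing map `ξ_(α,β)^(γ,δ)` is an algebra isomorphism onto the component indexed by
`(α,β)*(γ,δ)*(α,β)⁻¹`. -/
theorem stmt8 (K H : Type) [Field K] [Ring H] [HopfAlgebra K H] [FiniteDimensional K H]
    (Sinv : H →ₗ[K] H)
    (hS1 : Sinv ∘ₗ HopfAlgebra.antipode (R := K) (A := H) = LinearMap.id)
    (hS2 : HopfAlgebra.antipode (R := K) (A := H) ∘ₗ Sinv = LinearMap.id)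
    (α β γ δ : H ≃ₗ[K] H)
    (hα : DCP.IsHopfAut K α)
    (hβ : DCP.IsHopfAut K β)
    (hγ : DCP.IsHopfAut K γ)
    (hδ : DCP.IsHopfAut K δ)
    (M : Module.Dual K H ⊗[K] H →ₗ[K] Module.Dual K H ⊗[K] H →ₗ[K] Module.Dual K H ⊗[K] H)
    (hM : ∀ (p : Module.Dual K H) (h : H) (q : Module.Dual K H) (l : H),
      M (p ⊗ₜ[K] h) (q ⊗ₜ[K] l) = DCP.dprod K (γ.toLinearMap) (δ.toLinearMap) Sinv p h q l)
    (Mnew : Module.Dual K H ⊗[K] H →ₗ[K] Module.Dual K H ⊗[K] H →ₗ[K] Module.Dual K H ⊗[K] H)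
    (hMnew : ∀ (p : Module.Dual K H) (h : H) (q : Module.Dual K H) (l : H),
      Mnew (p ⊗ₜ[K] h) (q ⊗ₜ[K] l) = DCP.dprod K (α.toLinearMap ∘ₗ γ.toLinearMap ∘ₗ α.symm.toLinearMap) (α.toLinearMap ∘ₗ β.symm.toLinearMap ∘ₗ δ.toLinearMap ∘ₗ γ.symm.toLinearMap ∘ₗ β.toLinearMap ∘ₗ γ.toLinearMap ∘ₗ α.symm.toLinearMap) Sinv p h q l)
    :
    Function.Bijective (DCP.xiMap K α β γ) ∧
    (∀ (p : Module.Dual K H) (h : H) (q : Module.Dual K H) (l : H),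
      DCP.xiMap K α β γ (M (p ⊗ₜ[K] h) (q ⊗ₜ[K] l))
        = Mnew (DCP.xiMap K α β γ (p ⊗ₜ[K] h)) (DCP.xiMap K α β γ (q ⊗ₜ[K] l))) := by
  have hφc : IsCoalgMor (β.toLinearMap ∘ₗ α.symm.toLinearMap) :=
    isCoalgMor_comp hβ.2.2.1 (isCoalgMor_symm α hα.2.2.1)
  have hψc : IsCoalgMor (α.toLinearMap ∘ₗ γ.symm.toLinearMap ∘ₗ β.symm.toLinearMap
      ∘ₗ γ.toLinearMap) :=
    isCoalgMor_comp hα.2.2.1 (isCoalgMor_comp (isCoalgMor_symm γ hγ.2.2.1)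
      (isCoalgMor_comp (isCoalgMor_symm β hβ.2.2.1) hγ.2.2.1))
  have hψpt : ∀ w : H, Coalgebra.comul (R := K)
      ((α.toLinearMap ∘ₗ γ.symm.toLinearMap ∘ₗ β.symm.toLinearMap ∘ₗ γ.toLinearMap) w)
      = TensorProduct.map
          (α.toLinearMap ∘ₗ γ.symm.toLinearMap ∘ₗ β.symm.toLinearMap ∘ₗ γ.toLinearMap)
          (α.toLinearMap ∘ₗ γ.symm.toLinearMap ∘ₗ β.symm.toLinearMap ∘ₗ γ.toLinearMap)
          (Coalgebra.comul w) := by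
    intro w
    have := LinearMap.congr_fun hψc w
    simpa using this
  have hψm : ∀ a b : H,
      (α.toLinearMap ∘ₗ γ.symm.toLinearMap ∘ₗ β.symm.toLinearMap ∘ₗ γ.toLinearMap) (a * b)
        = (α.toLinearMap ∘ₗ γ.symm.toLinearMap ∘ₗ β.symm.toLinearMap ∘ₗ γ.toLinearMap) a
          * (α.toLinearMap ∘ₗ γ.symm.toLinearMap ∘ₗ β.symm.toLinearMap ∘ₗ γ.toLinearMap) b := by
    intro a b
    simp only [comp_apply, LinearEquiv.coe_coe]
    rw [hγ.1, aut_symm_mul β hβ, aut_symm_mul γ hγ, hα.1]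
  have hφm : ∀ a b : H,
      (β.toLinearMap ∘ₗ α.symm.toLinearMap) (a * b)
        = (β.toLinearMap ∘ₗ α.symm.toLinearMap) a * (β.toLinearMap ∘ₗ α.symm.toLinearMap) b := by
    intro a b
    simp only [comp_apply, LinearEquiv.coe_coe]
    rw [aut_symm_mul α hα, hβ.1]
  constructor
  · have hxi : DCP.xiMap K α β γ
        = (TensorProduct.congr ((α.symm ≪≫ₗ β).dualMap)
            (γ ≪≫ₗ β.symm ≪≫ₗ γ.symm ≪≫ₗ α)).toLinearMap := by
      apply TensorProduct.ext'; intro r w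
      simp only [DCP.xiMap, TensorProduct.map_tmul, TensorProduct.congr_tmul]
      congr 1
      all_goals try (ext u)
      all_goals simp
    rw [hxi]
    exact (TensorProduct.congr _ _).bijective
  · intro p h q l
    have hxt : ∀ (r : Module.Dual K H) (w : H), DCP.xiMap K α β γ (r ⊗ₜ[K] w)
        = ((β.toLinearMap ∘ₗ α.symm.toLinearMap).dualMap r) ⊗ₜ[K]
          ((α.toLinearMap ∘ₗ γ.symm.toLinearMap ∘ₗ β.symm.toLinearMap ∘ₗ γ.toLinearMap) w) := by
      intro r w
      simp [DCP.xiMap]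
    rw [hM p h q l, hxt p h, hxt q l, hMnew]
    simp only [DCP.dprod]
    have hcom2 : DCP.comul2 K
        ((α.toLinearMap ∘ₗ γ.symm.toLinearMap ∘ₗ β.symm.toLinearMap ∘ₗ γ.toLinearMap) h)
        = TensorProduct.map
            (α.toLinearMap ∘ₗ γ.symm.toLinearMap ∘ₗ β.symm.toLinearMap ∘ₗ γ.toLinearMap)
            (TensorProduct.map
              (α.toLinearMap ∘ₗ γ.symm.toLinearMap ∘ₗ β.symm.toLinearMap ∘ₗ γ.toLinearMap)
              (α.toLinearMap ∘ₗ γ.symm.toLinearMap ∘ₗ β.symm.toLinearMap ∘ₗ γ.toLinearMap))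
            (DCP.comul2 K h) := by
      have hnat : (Coalgebra.comul (R := K) (A := H)).lTensor H ∘ₗ TensorProduct.map
            (α.toLinearMap ∘ₗ γ.symm.toLinearMap ∘ₗ β.symm.toLinearMap ∘ₗ γ.toLinearMap)
            (α.toLinearMap ∘ₗ γ.symm.toLinearMap ∘ₗ β.symm.toLinearMap ∘ₗ γ.toLinearMap)
          = TensorProduct.map
              (α.toLinearMap ∘ₗ γ.symm.toLinearMap ∘ₗ β.symm.toLinearMap ∘ₗ γ.toLinearMap)
              (TensorProduct.map
                (α.toLinearMap ∘ₗ γ.symm.toLinearMap ∘ₗ β.symm.toLinearMap ∘ₗ γ.toLinearMap)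
                (α.toLinearMap ∘ₗ γ.symm.toLinearMap ∘ₗ β.symm.toLinearMap ∘ₗ γ.toLinearMap))
              ∘ₗ (Coalgebra.comul (R := K) (A := H)).lTensor H := by
        apply TensorProduct.ext'; intro a b
        simp only [comp_apply, TensorProduct.map_tmul, LinearMap.lTensor_tmul]
        have hb := hψpt b
        simp only [comp_apply] at hb
        rw [hb]
      have h2 := LinearMap.congr_fun hnat (Coalgebra.comul h)
      simp only [comp_apply] at h2
      calc DCP.comul2 K ((α.toLinearMap ∘ₗ γ.symm.toLinearMap ∘ₗ β.symm.toLinearMap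
              ∘ₗ γ.toLinearMap) h)
          = (Coalgebra.comul (R := K) (A := H)).lTensor H
              (Coalgebra.comul ((α.toLinearMap ∘ₗ γ.symm.toLinearMap ∘ₗ β.symm.toLinearMap
                ∘ₗ γ.toLinearMap) h)) := rfl
      _ = (Coalgebra.comul (R := K) (A := H)).lTensor H
              (TensorProduct.map
                (α.toLinearMap ∘ₗ γ.symm.toLinearMap ∘ₗ β.symm.toLinearMap ∘ₗ γ.toLinearMap)
                (α.toLinearMap ∘ₗ γ.symm.toLinearMap ∘ₗ β.symm.toLinearMap ∘ₗ γ.toLinearMap)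
                (Coalgebra.comul h)) := by rw [hψpt h]
      _ = TensorProduct.map
              (α.toLinearMap ∘ₗ γ.symm.toLinearMap ∘ₗ β.symm.toLinearMap ∘ₗ γ.toLinearMap)
              (TensorProduct.map
                (α.toLinearMap ∘ₗ γ.symm.toLinearMap ∘ₗ β.symm.toLinearMap ∘ₗ γ.toLinearMap)
                (α.toLinearMap ∘ₗ γ.symm.toLinearMap ∘ₗ β.symm.toLinearMap ∘ₗ γ.toLinearMap))
              ((Coalgebra.comul (R := K) (A := H)).lTensor H (Coalgebra.comul h)) := h2
      _ = _ := rfl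
    rw [hcom2]
    have key : DCP.xiMap K α β γ ∘ₗ DCP.lift3 K (DCP.coreTri K (Sinv ∘ₗ δ.toLinearMap)
          γ.toLinearMap (DCP.convMul K p) (LinearMap.mulRight K l) q)
        = DCP.lift3 K (DCP.coreTri K
            (Sinv ∘ₗ α.toLinearMap ∘ₗ β.symm.toLinearMap ∘ₗ δ.toLinearMap ∘ₗ γ.symm.toLinearMap
              ∘ₗ β.toLinearMap ∘ₗ γ.toLinearMap ∘ₗ α.symm.toLinearMap)
            (α.toLinearMap ∘ₗ γ.toLinearMap ∘ₗ α.symm.toLinearMap)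
            (DCP.convMul K ((β.toLinearMap ∘ₗ α.symm.toLinearMap).dualMap p))
            (LinearMap.mulRight K
              ((α.toLinearMap ∘ₗ γ.symm.toLinearMap ∘ₗ β.symm.toLinearMap ∘ₗ γ.toLinearMap) l))
            ((β.toLinearMap ∘ₗ α.symm.toLinearMap).dualMap q))
          ∘ₗ TensorProduct.map
              (α.toLinearMap ∘ₗ γ.symm.toLinearMap ∘ₗ β.symm.toLinearMap ∘ₗ γ.toLinearMap)
              (TensorProduct.map
                (α.toLinearMap ∘ₗ γ.symm.toLinearMap ∘ₗ β.symm.toLinearMap ∘ₗ γ.toLinearMap)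
                (α.toLinearMap ∘ₗ γ.symm.toLinearMap ∘ₗ β.symm.toLinearMap ∘ₗ γ.toLinearMap)) := by
      apply TensorProduct.ext'; intro x t
      induction t using TensorProduct.induction_on with
      | zero => simp
      | add t1 t2 ih1 ih2 =>
        simp only [tmul_add, map_add, comp_apply] at ih1 ih2 ⊢
        rw [ih1, ih2]
      | tmul y z =>
        simp only [comp_apply, TensorProduct.map_tmul, lift3_tmul, DCP.coreTri,
          LinearMap.mk₂_apply, DCP.inner3_apply]
        rw [hxt]
        congr 1
        · rw [LinearMap.dualMap_apply', convMul_comp hφc]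
          congr 1
          apply LinearMap.ext; intro w
          simp only [comp_apply, LinearMap.mulLeft_apply, LinearMap.mulRight_apply,
            LinearMap.dualMap_apply]
          have idA : (β.toLinearMap ∘ₗ α.symm.toLinearMap)
              ((α.toLinearMap ∘ₗ γ.toLinearMap ∘ₗ α.symm.toLinearMap)
                ((α.toLinearMap ∘ₗ γ.symm.toLinearMap ∘ₗ β.symm.toLinearMap ∘ₗ γ.toLinearMap) x))
              = γ x := by
            simp
          have idB : (β.toLinearMap ∘ₗ α.symm.toLinearMap) (Sinv
              ((α.toLinearMap ∘ₗ β.symm.toLinearMap ∘ₗ δ.toLinearMap ∘ₗ γ.symm.toLinearMap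
                  ∘ₗ β.toLinearMap ∘ₗ γ.toLinearMap ∘ₗ α.symm.toLinearMap)
                ((α.toLinearMap ∘ₗ γ.symm.toLinearMap ∘ₗ β.symm.toLinearMap ∘ₗ γ.toLinearMap) z)))
              = Sinv (δ z) := by
            have h1 : (α.toLinearMap ∘ₗ β.symm.toLinearMap ∘ₗ δ.toLinearMap ∘ₗ γ.symm.toLinearMap
                  ∘ₗ β.toLinearMap ∘ₗ γ.toLinearMap ∘ₗ α.symm.toLinearMap)
                ((α.toLinearMap ∘ₗ γ.symm.toLinearMap ∘ₗ β.symm.toLinearMap ∘ₗ γ.toLinearMap) z)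
                = α (β.symm (δ z)) := by
              simp
            rw [h1, aut_Sinv_comm Sinv hS1 hS2 α hα]
            simp only [comp_apply, LinearEquiv.coe_coe, LinearEquiv.symm_apply_apply]
            rw [← aut_Sinv_comm Sinv hS1 hS2 β hβ]
            simp
          calc q (Sinv (δ z) * ((β.toLinearMap ∘ₗ α.symm.toLinearMap) w * γ x))
              = q ((β.toLinearMap ∘ₗ α.symm.toLinearMap) (Sinv
                  ((α.toLinearMap ∘ₗ β.symm.toLinearMap ∘ₗ δ.toLinearMap ∘ₗ γ.symm.toLinearMap
                      ∘ₗ β.toLinearMap ∘ₗ γ.toLinearMap ∘ₗ α.symm.toLinearMap)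
                    ((α.toLinearMap ∘ₗ γ.symm.toLinearMap ∘ₗ β.symm.toLinearMap
                        ∘ₗ γ.toLinearMap) z)))
                  * ((β.toLinearMap ∘ₗ α.symm.toLinearMap) w
                    * (β.toLinearMap ∘ₗ α.symm.toLinearMap)
                        ((α.toLinearMap ∘ₗ γ.toLinearMap ∘ₗ α.symm.toLinearMap)
                          ((α.toLinearMap ∘ₗ γ.symm.toLinearMap ∘ₗ β.symm.toLinearMap
                              ∘ₗ γ.toLinearMap) x)))) := by
                rw [idA, idB]
          _ = q ((β.toLinearMap ∘ₗ α.symm.toLinearMap)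
                  ((Sinv ((α.toLinearMap ∘ₗ β.symm.toLinearMap ∘ₗ δ.toLinearMap
                      ∘ₗ γ.symm.toLinearMap ∘ₗ β.toLinearMap ∘ₗ γ.toLinearMap
                      ∘ₗ α.symm.toLinearMap)
                    ((α.toLinearMap ∘ₗ γ.symm.toLinearMap ∘ₗ β.symm.toLinearMap
                        ∘ₗ γ.toLinearMap) z)))
                    * (w * (α.toLinearMap ∘ₗ γ.toLinearMap ∘ₗ α.symm.toLinearMap)
                        ((α.toLinearMap ∘ₗ γ.symm.toLinearMap ∘ₗ β.symm.toLinearMap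
                            ∘ₗ γ.toLinearMap) x)))) := by
                rw [hφm, hφm]
        · simp only [LinearMap.mulRight_apply]
          rw [hψm]
          simp only [comp_apply]
    have hfin := LinearMap.congr_fun key (DCP.comul2 K h)
    simpa using hfin
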